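/- Let n be an integer with n > 2, set c₃ := log((n + √(n²−4))/2), define (u₁, v₁) := (√((n+√(n²−4))/2), √((n−√(n²−4))/2))/√n and (u₂, v₂) := (√((n−√(n²−4))/2), √((n+√(n²−4))/2))/√n, and let α₀ ∈ ℝ. Then the elements g₁ := (α₀u₁, α₀u₂, 0), g₂ := (α₀v₁, α₀v₂, 0), g₃ := (0, 0, c₃) of the Sol group satisfy the relations of the fundamental group of the compact manifold f1/1(n): g₁·g₂ = g₂·g₁, g₃·g₁·g₃⁻¹ = g₂, and g₃·g₂·g₃⁻¹ = g₂ⁿ·g₁⁻¹. -/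

import Mathlib

noncomputable section

open Real

/-- Multiplication in the Sol (Bianchi VI₀) group on ℝ³:
`(g¹,g²,g³)·(h¹,h²,h³) = (g¹ + e^{−g³}h¹, g² + e^{g³}h², g³ + h³)`. -/
def solMul (g h : ℝ × ℝ × ℝ) : ℝ × ℝ × ℝ :=
  (g.1 + Real.exp (-g.2.2) * h.1, g.2.1 + Real.exp g.2.2 * h.2.1, g.2.2 + h.2.2)

/-- Inverse in the Sol group. -/
def solInv (g : ℝ × ℝ × ℝ) : ℝ × ℝ × ℝ :=
  (-Real.exp g.2.2 * g.1, -Real.exp (-g.2.2) * g.2.1, -g.2.2)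

/-- `n`-fold product in the Sol group. -/
def solPow (g : ℝ × ℝ × ℝ) : ℕ → ℝ × ℝ × ℝ
  | 0 => ((0 : ℝ), (0 : ℝ), (0 : ℝ))
  | k + 1 => solMul (solPow g k) g

/-- `solPow` of an element with zero third coordinate is componentwise scaling. -/
lemma solPow_flat (a b : ℝ) (k : ℕ) : solPow (a, b, (0:ℝ)) k = (k * a, k * b, 0) := by
  induction k with
  | zero => simp [solPow]
  | succ k ih =>
      simp only [solPow, ih, solMul, Real.exp_zero, Nat.cast_succ]
      norm_num
      constructor <;> ring_nf

/-- The generators `g₁ = (α₀u₁, α₀u₂, 0)`, `g₂ = (α₀v₁, α₀v₂, 0)`, `g₃ = (0,0,c₃)`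
satisfy the relations of the fundamental group of `f1/1(n)`:
`[g₁,g₂] = e`, `g₃g₁g₃⁻¹ = g₂` and `g₃g₂g₃⁻¹ = g₂ⁿ·g₁⁻¹`. -/
theorem sol_f1_relations (n : ℤ) (hn : 2 < n) (α₀ : ℝ) :
    let c₃ : ℝ := Real.log (((n : ℝ) + Real.sqrt ((n : ℝ) ^ 2 - 4)) / 2)
    let u₁ : ℝ := Real.sqrt (((n : ℝ) + Real.sqrt ((n : ℝ) ^ 2 - 4)) / 2) / Real.sqrt (n : ℝ)
    let v₁ : ℝ := Real.sqrt (((n : ℝ) - Real.sqrt ((n : ℝ) ^ 2 - 4)) / 2) / Real.sqrt (n : ℝ)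
    let u₂ : ℝ := Real.sqrt (((n : ℝ) - Real.sqrt ((n : ℝ) ^ 2 - 4)) / 2) / Real.sqrt (n : ℝ)
    let v₂ : ℝ := Real.sqrt (((n : ℝ) + Real.sqrt ((n : ℝ) ^ 2 - 4)) / 2) / Real.sqrt (n : ℝ)
    let g₁ : ℝ × ℝ × ℝ := (α₀ * u₁, α₀ * u₂, 0)
    let g₂ : ℝ × ℝ × ℝ := (α₀ * v₁, α₀ * v₂, 0)
    let g₃ : ℝ × ℝ × ℝ := ((0 : ℝ), (0 : ℝ), c₃)
    solMul g₁ g₂ = solMul g₂ g₁ ∧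
    solMul (solMul g₃ g₁) (solInv g₃) = g₂ ∧
    solMul (solMul g₃ g₂) (solInv g₃) = solMul (solPow g₂ n.toNat) (solInv g₁) := by
  intro c₃ u₁ v₁ u₂ v₂ g₁ g₂ g₃
  have hn2 : (2:ℝ) < (n:ℝ) := by exact_mod_cast hn
  have hs0 : (0:ℝ) ≤ (n:ℝ)^2 - 4 := by nlinarith
  set s : ℝ := Real.sqrt ((n:ℝ)^2 - 4) with hs_def
  have hs_nonneg : 0 ≤ s := Real.sqrt_nonneg _
  have hs_sq : s ^ 2 = (n:ℝ)^2 - 4 := Real.sq_sqrt hs0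
  have hs_lt : s < (n:ℝ) := by
    nlinarith [hs_sq, hs_nonneg]
  set L : ℝ := ((n:ℝ) + s) / 2 with hL_def
  set M : ℝ := ((n:ℝ) - s) / 2 with hM_def
  have hLpos : 0 < L := by simp only [hL_def]; linarith
  have hMpos : 0 < M := by simp only [hM_def]; linarith
  have hLM : L * M = 1 := by
    simp only [hL_def, hM_def]; nlinarith [hs_sq]
  have hsum : L + M = (n:ℝ) := by simp only [hL_def, hM_def]; ring
  have heL : Real.exp c₃ = L := Real.exp_log hLpos
  have heM : Real.exp (-c₃) = M := by
    rw [Real.exp_neg, heL]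
    field_simp
    linarith [hLM]
  have hA : M * Real.sqrt L = Real.sqrt M := by
    rw [show Real.sqrt M = Real.sqrt (M^2 * L) by rw [show M^2*L = M by nlinarith]]
    rw [Real.sqrt_mul (sq_nonneg M), Real.sqrt_sq hMpos.le]
  have hB : L * Real.sqrt M = Real.sqrt L := by
    rw [show Real.sqrt L = Real.sqrt (L^2 * M) by rw [show L^2*M = L by nlinarith]]
    rw [Real.sqrt_mul (sq_nonneg L), Real.sqrt_sq hLpos.le]
  have hcast : ((n.toNat : ℕ) : ℝ) = (n:ℝ) := by
    have := Int.toNat_of_nonneg (by omega : (0:ℤ) ≤ n)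
    exact_mod_cast congrArg (Int.cast : ℤ → ℝ) this
  have hc : Real.sqrt (n:ℝ) = Real.sqrt (n:ℝ) := rfl
  refine ⟨?_, ?_, ?_⟩
  · simp only [g₁, g₂, solMul, Real.exp_zero, neg_zero, one_mul, Prod.mk.injEq]
    refine ⟨by ring_nf, by ring_nf, by trivial⟩
  · simp only [g₁, g₂, g₃, solMul, solInv, u₁, u₂, v₁, v₂, Real.exp_zero, neg_zero,
      one_mul, mul_zero, add_zero, zero_add, mul_one, neg_neg, Prod.mk.injEq]
    rw [← hs_def, ← hL_def, ← hM_def, heL, heM]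
    refine ⟨?_, ?_, by ring_nf⟩
    · linear_combination (α₀ / Real.sqrt (n:ℝ)) * hA
    · linear_combination (α₀ / Real.sqrt (n:ℝ)) * hB
  · simp only [g₁, g₂, g₃, solPow_flat, solMul, solInv, u₁, u₂, v₁, v₂, hcast,
      Real.exp_zero, neg_zero, one_mul, mul_zero, add_zero, zero_add, mul_one,
      neg_neg, Prod.mk.injEq]
    rw [← hs_def, ← hL_def, ← hM_def, heL, heM]
    refine ⟨?_, ?_, by ring_nf⟩
    · linear_combination (-(α₀ / Real.sqrt (n:ℝ))) * hB
        + (α₀ * Real.sqrt M / Real.sqrt (n:ℝ)) * hsum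
    · linear_combination (-(α₀ / Real.sqrt (n:ℝ))) * hA
        + (α₀ * Real.sqrt L / Real.sqrt (n:ℝ)) * hsum
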